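/- Let (∧V, d) be a pure minimal Sullivan algebra with dim V < ∞, with even-degree generators x_1,…,x_p and odd-degree generators y_1,…,y_q. In the relative Sullivan model (∧V⊗∧V⊗∧sV, d) of the multiplication map ∧V⊗∧V → ∧V, any ∧V⊗∧V-linear cocycle η: ∧V⊗∧V⊗∧sV → ∧V⊗∧V satisfying η(sx_1⋯sx_p) = (1⊗y_1 − y_1⊗1)⋯(1⊗y_q − y_q⊗1) represents a nonzero class in Ext_{∧V⊗∧V}(∧V, ∧V⊗∧V). -/

import Mathlib

noncomputable section
namespace Brane

/-- The monomial in a generator family indexed by a list. -/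
def mon {A G : Type} [Ring A] (gen : G → A) (l : List G) : A := (l.map gen).prod

/-- The degree-`m` component: the `K`-span of monomials of total degree `m`. -/
def grading (K : Type) {A G : Type} [Field K] [Ring A] [Algebra K A]
    (gen : G → A) (dg : G → ℤ) (m : ℤ) : Submodule K A :=
  Submodule.span K {a : A | ∃ l : List G, (l.map dg).sum = m ∧ a = mon gen l}

/-- Graded commutativity on generators (Koszul signs). -/
def GradedComm (K : Type) {A G : Type} [Field K] [Ring A] [Algebra K A]
    (gen : G → A) (dg : G → ℤ) : Prop :=
  ∀ i j, gen i * gen j = ((-1 : K) ^ (dg i * dg j)) • (gen j * gen i)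

/-- `A` is the free graded-commutative algebra on the generators: the reduced sorted
monomials (odd generators appearing at most once) form a `K`-basis. -/
def IsFreeGCAOn (K : Type) {A G : Type} [Field K] [Ring A] [Algebra K A] [LinearOrder G]
    (gen : G → A) (dg : G → ℤ) : Prop :=
  ∃ b : Module.Basis {l : List G // l.Pairwise (· ≤ ·) ∧ ∀ g, Odd (dg g) → l.count g ≤ 1} K A,
    ∀ l, b l = mon gen l.1

/-- A graded `K`-linear derivation of degree `r` (Koszul sign rule). -/
def IsGradedDer (K : Type) {A G : Type} [Field K] [Ring A] [Algebra K A]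
    (gen : G → A) (dg : G → ℤ) (r : ℤ) (D : A →ₗ[K] A) : Prop :=
  (∀ (i : ℤ) (a : A), a ∈ grading K gen dg i → D a ∈ grading K gen dg (i + r)) ∧
  (∀ (i : ℤ) (a b : A), a ∈ grading K gen dg i →
    D (a * b) = D a * b + ((-1 : K) ^ (r * i)) • (a * D b))

/-- A differential: a graded derivation of degree `1` squaring to zero. -/
def IsDifferential (K : Type) {A G : Type} [Field K] [Ring A] [Algebra K A]
    (gen : G → A) (dg : G → ℤ) (D : A →ₗ[K] A) : Prop :=
  IsGradedDer K gen dg 1 D ∧ ∀ a, D (D a) = 0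

/-- The Sullivan (nilpotence) condition. -/
def SullivanCond (K : Type) {A G : Type} [Field K] [Ring A] [Algebra K A]
    (gen : G → A) (D : A →ₗ[K] A) : Prop :=
  ∃ w : G → ℕ, ∀ g, D (gen g) ∈ Algebra.adjoin K (gen '' {g' | w g' < w g})

/-- Decomposable elements (span of monomials of length at least two). -/
def decomposables (K : Type) {A G : Type} [Field K] [Ring A] [Algebra K A]
    (gen : G → A) : Submodule K A :=
  Submodule.span K {a : A | ∃ l : List G, 2 ≤ l.length ∧ a = mon gen l}



/-- A differential graded module structure over a dga `(A, dA, gA)`. -/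
structure DGModData (K A M : Type) [Field K] [Ring A] [Algebra K A]
    [AddCommGroup M] [Module K M] [Module A M] [IsScalarTower K A M]
    (dA : A →ₗ[K] A) (gA : ℤ → Submodule K A) where
  g : ℤ → Submodule K M
  d : M →ₗ[K] M
  d_d : ∀ m, d (d m) = 0
  d_mem : ∀ (i : ℤ) (m : M), m ∈ g i → d m ∈ g (i + 1)
  smul_mem : ∀ (i j : ℤ) (a : A) (m : M), a ∈ gA i → m ∈ g j → a • m ∈ g (i + j)
  leibniz : ∀ (i : ℤ) (a : A) (m : M), a ∈ gA i →
    d (a • m) = dA a • m + ((-1 : K) ^ i) • (a • d m)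
  exhaustive : ∀ m : M, m ∈ Submodule.span K (⋃ i : ℤ, (g i : Set M))

variable {K A M : Type} [Field K] [Ring A] [Algebra K A]
  [AddCommGroup M] [Module K M] [Module A M] [IsScalarTower K A M]
  {dA : A →ₗ[K] A} {gA : ℤ → Submodule K A}

/-- Semifreeness: a free homogeneous `A`-basis filtered so that the differential
lowers the filtration. -/
def IsSemifree (D : DGModData K A M dA gA) : Prop :=
  ∃ (ι : Type) (b : ι → M) (w : ι → ℕ) (dgb : ι → ℤ),
    LinearIndependent A b ∧ Submodule.span A (Set.range b) = ⊤ ∧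
    (∀ i, b i ∈ D.g (dgb i)) ∧
    (∀ i, D.d (b i) ∈ Submodule.span A (b '' {j | w j < w i}))

/-- `M` is a (semifree) resolution of the trivial module `K`: it is semifree and its
cohomology is one-dimensional, concentrated in degree `0`. -/
def IsKResolution (D : DGModData K A M dA gA) : Prop :=
  IsSemifree D ∧
  (∀ n : ℤ, n ≠ 0 → ∀ m ∈ D.g n, D.d m = 0 → ∃ m' ∈ D.g (n - 1), D.d m' = m) ∧
  (∃ z ∈ D.g 0, D.d z = 0 ∧
    (∀ m' ∈ D.g (-1), D.d m' ≠ z) ∧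
    (∀ z' ∈ D.g 0, D.d z' = 0 → ∃ c : K, ∃ m' ∈ D.g (-1), z' - c • z = D.d m'))

/-- An `A`-linear map `M → A` homogeneous of degree `n`. -/
def IsDegHom (D : DGModData K A M dA gA) (n : ℤ) (f : M →ₗ[A] A) : Prop :=
  ∀ (i : ℤ) (m : M), m ∈ D.g i → f m ∈ gA (i + n)

/-- A degree `n` cocycle in the Hom complex `Hom_A(M, A)`. -/
def IsExtCocycle (D : DGModData K A M dA gA) (n : ℤ) (f : M →ₗ[A] A) : Prop :=
  IsDegHom D n f ∧ ∀ m, dA (f m) = ((-1 : K) ^ n) • f (D.d m)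

/-- A degree `n` coboundary in the Hom complex `Hom_A(M, A)`. -/
def IsExtCoboundary (D : DGModData K A M dA gA) (n : ℤ) (f : M →ₗ[A] A) : Prop :=
  ∃ g : M →ₗ[A] A, IsDegHom D (n - 1) g ∧
    ∀ m, f m = dA (g m) - ((-1 : K) ^ (n - 1)) • g (D.d m)

/-- `Ext_A(K, A)` is one-dimensional, concentrated in degree `mdim`:
stated via an arbitrary semifree resolution of `K` over `A`. -/
def ExtOfKIsOneDimAt (dA : A →ₗ[K] A) (gA : ℤ → Submodule K A) (mdim : ℤ) : Prop :=
  ∀ (M : Type) [AddCommGroup M] [Module K M] [Module A M] [IsScalarTower K A M]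
    (D : DGModData K A M dA gA), IsKResolution D →
      (∃ f, IsExtCocycle D mdim f ∧ ¬ IsExtCoboundary D mdim f) ∧
      (∀ (n : ℤ) (f), IsExtCocycle D n f → n ≠ mdim → IsExtCoboundary D n f) ∧
      (∀ f g, IsExtCocycle D mdim f → IsExtCocycle D mdim g →
        ∃ c c' : K, ¬ (c = 0 ∧ c' = 0) ∧ IsExtCoboundary D mdim (c • f - c' • g))



abbrev GCAIdx (G : Type) [LinearOrder G] (dg : G → ℤ) : Type :=
  {l : List G // l.Pairwise (· ≤ ·) ∧ ∀ g, Odd (dg g) → l.count g ≤ 1}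

lemma count_le_one_of_nodup {G : Type} [LinearOrder G] (dg : G → ℤ) {l : List G}
    (h : l.Nodup) : ∀ g, Odd (dg g) → l.count g ≤ 1 :=
  fun g _ => List.nodup_iff_count_le_one.mp h g

section Helpers
variable {K A G : Type} [Field K] [Ring A] [Algebra K A]

@[simp] lemma mon_nil (gen : G → A) : mon gen ([] : List G) = 1 := rfl

@[simp] lemma mon_cons (gen : G → A) (g : G) (l : List G) :
    mon gen (g :: l) = gen g * mon gen l := by simp [mon]

lemma mon_append (gen : G → A) (l₁ l₂ : List G) :
    mon gen (l₁ ++ l₂) = mon gen l₁ * mon gen l₂ := by simp [mon]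

lemma neg_one_zpow_pm (n : ℤ) : ((-1 : K) ^ n = 1) ∨ ((-1 : K) ^ n = -1) := by
  induction n using Int.induction_on with
  | zero => left; simp
  | succ k ih =>
    rcases ih with h | h
    · right; rw [zpow_add_one₀ (by norm_num : (-1 : K) ≠ 0), h]; ring
    · left; rw [zpow_add_one₀ (by norm_num : (-1 : K) ≠ 0), h]; ring
  | pred k ih =>
    rcases ih with h | h
    · right; rw [zpow_sub_one₀ (by norm_num : (-1 : K) ≠ 0), h]; norm_num
    · left; rw [zpow_sub_one₀ (by norm_num : (-1 : K) ≠ 0), h]; norm_num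

lemma neg_one_zpow_even {n : ℤ} (h : Even n) : ((-1 : K) ^ n) = 1 := by
  obtain ⟨m, rfl⟩ := h
  rw [zpow_add₀ (by norm_num : (-1 : K) ≠ 0)]
  rcases neg_one_zpow_pm (K := K) m with h | h <;> rw [h] <;> ring

lemma neg_one_zpow_odd {n : ℤ} (h : Odd n) : ((-1 : K) ^ n) = -1 := by
  obtain ⟨m, rfl⟩ := h
  rw [zpow_add_one₀ (by norm_num : (-1 : K) ≠ 0), neg_one_zpow_even ⟨m, two_mul m⟩]
  ring

variable (gen : G → A) (dg : G → ℤ)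

lemma gen_mem_grading (g : G) : gen g ∈ grading K gen dg (dg g) :=
  Submodule.subset_span ⟨[g], by simp, by simp⟩

lemma one_mem_grading : (1 : A) ∈ grading K gen dg 0 :=
  Submodule.subset_span ⟨[], by simp, by simp⟩

lemma der_one_eq_zero {r : ℤ} {D : A →ₗ[K] A} (hD : IsGradedDer K gen dg r D) :
    D 1 = 0 := by
  have h := hD.2 0 1 1 (one_mem_grading gen dg)
  simp only [mul_one, mul_zero, zpow_zero, one_smul, one_mul] at h
  exact (left_eq_add.mp h)

variable [CharZero K] (hcomm : GradedComm K gen dg)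
include hcomm

lemma odd_sq_zero {g : G} (h : Odd (dg g)) : gen g * gen g = 0 := by
  have h2 := hcomm g g
  rw [neg_one_zpow_odd (h.mul h), neg_one_smul] at h2
  have : (2 : K) • (gen g * gen g) = 0 := by
    rw [two_smul]; nth_rewrite 1 [h2]; simp
  have h20 : (2 : K) ≠ 0 := two_ne_zero
  simpa [smul_eq_zero, h20] using this

variable [LinearOrder G]

lemma insert_mon : ∀ (l : List G), l.Pairwise (· ≤ ·) → ∀ g : G,
    ∃ (c : K) (l' : List G), (c = 1 ∨ c = -1) ∧ l'.Perm (g :: l) ∧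
      l'.Pairwise (· ≤ ·) ∧ mon gen (g :: l) = c • mon gen l' := by
  intro l
  induction l with
  | nil =>
    intro _ g
    exact ⟨1, [g], Or.inl rfl, List.Perm.refl _, by simp, (one_smul K _).symm⟩
  | cons h t ih =>
    intro hs g
    rcases le_or_gt g h with hgh | hhg
    · refine ⟨1, g :: h :: t, Or.inl rfl, List.Perm.refl _, ?_, (one_smul K _).symm⟩
      rw [List.pairwise_cons]
      exact ⟨fun b hb => by
        rcases List.mem_cons.mp hb with rfl | hb
        · exact hgh
        · exact hgh.trans ((List.pairwise_cons.mp hs).1 b hb), hs⟩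
    · obtain ⟨c, l'', hc, hperm, hsort, hmon⟩ := ih (List.pairwise_cons.mp hs).2 g
      rcases neg_one_zpow_pm (K := K) (dg g * dg h) with hsgn | hsgn
      all_goals {
        refine ⟨((-1 : K) ^ (dg g * dg h)) * c, h :: l'', ?_, ?_, ?_, ?_⟩
        · rw [hsgn]; rcases hc with rfl | rfl <;> simp
        · exact (hperm.cons h).trans (List.Perm.swap g h t)
        · rw [List.pairwise_cons]
          refine ⟨fun b hb => ?_, hsort⟩
          rcases List.mem_cons.mp (hperm.subset hb) with rfl | hb'
          · exact hhg.le
          · exact (List.pairwise_cons.mp hs).1 b hb'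
        · calc mon gen (g :: h :: t) = (gen g * gen h) * mon gen t := by
                simp [mul_assoc]
            _ = (((-1 : K) ^ (dg g * dg h)) • (gen h * gen g)) * mon gen t := by
                rw [hcomm g h]
            _ = ((-1 : K) ^ (dg g * dg h)) • (gen h * mon gen (g :: t)) := by
                rw [smul_mul_assoc, mon_cons, mul_assoc]
            _ = ((-1 : K) ^ (dg g * dg h)) • (gen h * (c • mon gen l'')) := by
                rw [← hmon]
            _ = (((-1 : K) ^ (dg g * dg h)) * c) • mon gen (h :: l'') := by
                rw [mon_cons, mul_smul_comm, smul_smul]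
      }

lemma sort_mon : ∀ (l : List G),
    ∃ (c : K) (l' : List G), (c = 1 ∨ c = -1) ∧ l'.Perm l ∧
      l'.Pairwise (· ≤ ·) ∧ mon gen l = c • mon gen l' := by
  intro l
  induction l with
  | nil => exact ⟨1, [], Or.inl rfl, List.Perm.refl _, by simp, (one_smul K _).symm⟩
  | cons g t ih =>
    obtain ⟨c, l₁, hc, hp, hs, hm⟩ := ih
    obtain ⟨c₂, l₂, hc₂, hp₂, hs₂, hm₂⟩ := insert_mon gen dg hcomm l₁ hs g
    refine ⟨c * c₂, l₂, ?_, hp₂.trans (hp.cons g), hs₂, ?_⟩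
    · rcases hc with rfl | rfl <;> rcases hc₂ with rfl | rfl <;> simp
    · rw [mon_cons, hm, mul_smul_comm, ← mon_cons, hm₂, smul_smul]

lemma sorted_dup_zero : ∀ (l : List G), l.Pairwise (· ≤ ·) → ∀ g : G, Odd (dg g) →
    2 ≤ l.count g → mon gen l = 0 := by
  intro l
  induction l with
  | nil => intro _ g _ h; simp at h
  | cons h t ih =>
    intro hs g hg hcount
    by_cases h2 : 2 ≤ t.count g
    · rw [mon_cons, ih (List.pairwise_cons.mp hs).2 g hg h2, mul_zero]
    · have hhg : h = g := by
        by_contra hne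
        rw [List.count_cons_of_ne hne] at hcount
        exact h2 hcount
      subst hhg
      rw [List.count_cons_self] at hcount
      have hmem : h ∈ t := List.count_pos_iff.mp (by omega)
      cases t with
      | nil => simp at hmem
      | cons a t' =>
        have hga : h ≤ a := (List.pairwise_cons.mp hs).1 a (by simp)
        have hah : a = h := by
          rcases List.mem_cons.mp hmem with h' | hmem'
          · exact h'.symm
          · exact le_antisymm ((List.pairwise_cons.mp (List.pairwise_cons.mp hs).2).1 h hmem') hga
        subst hah
        rw [mon_cons, mon_cons, ← mul_assoc, odd_sq_zero gen dg hcomm hg, zero_mul]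

/-- Coordinate of a monomial on a basis index with non-permutation-equal list vanishes. -/
lemma coord_eq_zero
    (b : Module.Basis {l : List G // l.Pairwise (· ≤ ·) ∧ ∀ g, Odd (dg g) → l.count g ≤ 1} K A)
    (hb : ∀ l, b l = mon gen l.1)
    (l : List G) (l₀ : {l : List G // l.Pairwise (· ≤ ·) ∧ ∀ g, Odd (dg g) → l.count g ≤ 1})
    (hne : ¬ l.Perm l₀.1) : b.repr (mon gen l) l₀ = 0 := by
  obtain ⟨c, l', hc, hperm, hsort, hmon⟩ := sort_mon gen dg hcomm l
  by_cases hred : ∀ g, Odd (dg g) → l'.count g ≤ 1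
  · have hbl : b ⟨l', hsort, hred⟩ = mon gen l' := hb ⟨l', hsort, hred⟩
    rw [hmon, ← hbl, map_smul, Finsupp.smul_apply, Module.Basis.repr_self]
    have hne' : (⟨l', hsort, hred⟩ : {l : List G // l.Pairwise (· ≤ ·) ∧ ∀ g, Odd (dg g) → l.count g ≤ 1}) ≠ l₀ := by
      intro h
      apply hne
      have hl : l' = l₀.1 := congrArg Subtype.val h
      rw [← hl]
      exact hperm.symm
    rw [Finsupp.single_eq_of_ne hne'.symm, smul_zero]
  · push_neg at hred
    obtain ⟨g, hg, hcount⟩ := hred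
    rw [hmon, sorted_dup_zero gen dg hcomm l' hsort g hg hcount, smul_zero, map_zero,
      Finsupp.coe_zero, Pi.zero_apply]

omit hcomm

lemma mem_span_comap {A' : Type} [AddCommGroup A'] [Module K A']
    {S : Set A} {N : Submodule K A'} (f : A →ₗ[K] A') (h : ∀ a ∈ S, f a ∈ N)
    {w : A} (hw : w ∈ Submodule.span K S) : f w ∈ N := by
  have : Submodule.span K S ≤ N.comap f := Submodule.span_le.mpr h
  exact this hw

lemma map_mon {P : Type} [Ring P] [Algebra K P] {G' : Type}
    (f : A →ₐ[K] P) (e : G → G') (pg : G' → P)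
    (h : ∀ g, f (gen g) = pg (e g)) (l : List G) :
    f (mon gen l) = mon pg (l.map e) := by
  induction l with
  | nil => simp
  | cons g t ih => rw [mon_cons, map_mul, h, ih, List.map_cons, mon_cons]


lemma list_prod_eq_mon (gen : G → A) (Q : G → Prop) :
    ∀ (lA : List A), (∀ a ∈ lA, ∃ g, Q g ∧ a = gen g) →
    ∃ l : List G, (∀ g ∈ l, Q g) ∧ lA.prod = mon gen l := by
  intro lA
  induction lA with
  | nil => exact fun _ => ⟨[], by simp, by simp⟩
  | cons a t ih =>
    intro h
    obtain ⟨g, hQ, rfl⟩ := h a (by simp)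
    obtain ⟨l, hl, hp⟩ := ih (fun b hb => h b (List.mem_cons_of_mem _ hb))
    refine ⟨g :: l, ?_, by rw [List.prod_cons, hp, mon_cons]⟩
    intro g' hg'
    rcases List.mem_cons.mp hg' with rfl | hg''
    · exact hQ
    · exact hl g' hg''

lemma grading_adjoin_mem_span [CharZero K] [LinearOrder G] (gen : G → A) (dg : G → ℤ)
    (hcomm : GradedComm K gen dg)
    (b : Module.Basis (GCAIdx G dg) K A)
    (hb : ∀ l, b l = mon gen l.1)
    (good : G → Prop) {w : A} {t : ℤ} (ht : t ≠ 0)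
    (hw : w ∈ grading K gen dg t)
    (hadj : w ∈ Submodule.span K {a : A | ∃ l : List G, (∀ g ∈ l, good g) ∧ a = mon gen l}) :
    w ∈ Submodule.span K {a : A | ∃ l : List G, l ≠ [] ∧ (∀ g ∈ l, good g) ∧ a = mon gen l} := by
  have hcoord : ∀ l₀ : GCAIdx G dg, b.repr w l₀ ≠ 0 →
      l₀.1 ≠ [] ∧ ∀ g ∈ l₀.1, good g := by
    intro l₀ h0
    constructor
    · intro hnil
      apply h0
      have hker : grading K gen dg t ≤ LinearMap.ker (b.coord l₀) := by
        apply Submodule.span_le.mpr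
        rintro a ⟨l, hsum, rfl⟩
        apply LinearMap.mem_ker.mpr
        rw [Module.Basis.coord_apply]
        apply coord_eq_zero gen dg hcomm b hb
        intro hp
        rw [hnil] at hp
        have hln := hp.eq_nil
        rw [hln] at hsum
        simp only [List.map_nil, List.sum_nil] at hsum
        exact ht hsum.symm
      have hmem := hker hw
      rw [LinearMap.mem_ker, Module.Basis.coord_apply] at hmem
      exact hmem
    · intro g hg
      by_contra hbad
      apply h0
      have hker : Submodule.span K {a : A | ∃ l : List G, (∀ g ∈ l, good g) ∧ a = mon gen l} ≤
          LinearMap.ker (b.coord l₀) := by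
        apply Submodule.span_le.mpr
        rintro a ⟨l, hgood, rfl⟩
        apply LinearMap.mem_ker.mpr
        rw [Module.Basis.coord_apply]
        apply coord_eq_zero gen dg hcomm b hb
        intro hp
        exact hbad (hgood g (hp.symm.subset hg))
      have hmem := hker hadj
      rw [LinearMap.mem_ker, Module.Basis.coord_apply] at hmem
      exact hmem
  have hsupp := b.mem_span_repr_support w
  refine Submodule.span_le.mpr ?_ hsupp
  rintro a ⟨l₀, hl₀, rfl⟩
  obtain ⟨hne, hall⟩ := hcoord l₀ (Finsupp.mem_support_iff.mp hl₀)
  rw [hb l₀]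
  exact Submodule.subset_span ⟨l₀.1, hne, hall, rfl⟩

end Helpers

/-- Let `(∧V, d)` be a pure minimal Sullivan algebra with `dim V < ∞`,
with even-degree generators `x_1, …, x_p` and odd-degree generators `y_1, …, y_q`.
In the relative Sullivan model `(∧V ⊗ ∧V ⊗ ∧sV, d)` of the multiplication map
`∧V ⊗ ∧V → ∧V` (where `d(sv) = 1⊗v - v⊗1 - Σ_{i≥1} (sd)^i/i! (v⊗1)`), any
`∧V⊗∧V`-linear cocycle `η` satisfying
`η(sx_1⋯sx_p) = (1⊗y_1 - y_1⊗1)⋯(1⊗y_q - y_q⊗1)` represents a nonzero class in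
`Ext_{∧V⊗∧V}(∧V, ∧V⊗∧V)`. -/
theorem path_model_shriek_nonzero
    (K A P : Type) [Field K] [CharZero K] [Ring A] [Algebra K A] [Ring P] [Algebra K P]
    (p q : ℕ) [LinearOrder (Fin p ⊕ Fin q)] [LinearOrder ((Fin p ⊕ Fin q) ⊕ (Fin p ⊕ Fin q) ⊕ (Fin p ⊕ Fin q))]
    -- the pure minimal Sullivan algebra (∧V, d)
    (gen : Fin p ⊕ Fin q → A) (dg : Fin p ⊕ Fin q → ℤ) (hpos : ∀ g, 1 ≤ dg g)
    (heven : ∀ i : Fin p, Even (dg (Sum.inl i))) (hodd : ∀ j : Fin q, Odd (dg (Sum.inr j)))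
    (hfree : IsFreeGCAOn K gen dg) (hcomm : GradedComm K gen dg)
    (dA : A →ₗ[K] A) (hdA : IsDifferential K gen dg dA)
    (hpure_even : ∀ i : Fin p, dA (gen (Sum.inl i)) = 0)
    (hpure_odd : ∀ j : Fin q, dA (gen (Sum.inr j)) ∈
      Algebra.adjoin K (Set.range fun i : Fin p => gen (Sum.inl i)))
    (hminimal : ∀ g, dA (gen g) ∈ decomposables K gen)
    -- the path-space model P = ∧V ⊗ ∧V ⊗ ∧sV, free on two copies of V and on sV
    (pgen : (Fin p ⊕ Fin q) ⊕ (Fin p ⊕ Fin q) ⊕ (Fin p ⊕ Fin q) → P)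
    (pdg : (Fin p ⊕ Fin q) ⊕ (Fin p ⊕ Fin q) ⊕ (Fin p ⊕ Fin q) → ℤ)
    (hpdg : ∀ g, pdg (Sum.inl g) = dg g ∧ pdg (Sum.inr (Sum.inl g)) = dg g ∧
      pdg (Sum.inr (Sum.inr g)) = dg g - 1)
    (hPfree : IsFreeGCAOn K pgen pdg) (hPcomm : GradedComm K pgen pdg)
    -- the two inclusions ∧V → ∧V ⊗ ∧V ⊆ P
    (i1 i2 : A →ₐ[K] P)
    (hi1 : ∀ g, i1 (gen g) = pgen (Sum.inl g))
    (hi2 : ∀ g, i2 (gen g) = pgen (Sum.inr (Sum.inl g)))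
    -- the degree -1 derivation s with s(v⊗1) = sv, s(1⊗v) = 0, s(sv) = 0
    (sder : P →ₗ[K] P) (hsder : IsGradedDer K pgen pdg (-1) sder)
    (hs1 : ∀ g, sder (pgen (Sum.inl g)) = pgen (Sum.inr (Sum.inr g)))
    (hs2 : ∀ g, sder (pgen (Sum.inr (Sum.inl g))) = 0)
    (hs3 : ∀ g, sder (pgen (Sum.inr (Sum.inr g))) = 0)
    -- the differential of the path model
    (dP : P →ₗ[K] P) (hdP : IsDifferential K pgen pdg dP)
    (hdP1 : ∀ a : A, dP (i1 a) = i1 (dA a)) (hdP2 : ∀ a : A, dP (i2 a) = i2 (dA a))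
    (hdPs : ∀ g, ∃ N : ℕ, (∀ i : ℕ, N < i → ((sder ∘ₗ dP) ^ i) (i1 (gen g)) = 0) ∧
      dP (pgen (Sum.inr (Sum.inr g))) =
        i2 (gen g) - i1 (gen g) -
          ∑ i ∈ Finset.Icc 1 N, ((i.factorial : K)⁻¹) • ((sder ∘ₗ dP) ^ i) (i1 (gen g)))
    -- the ∧V⊗∧V-linear cocycle η of some degree n₀, with values in ∧V⊗∧V
    (η : P →ₗ[K] P) (n₀ : ℤ)
    (hηlin : ∀ (a b : A) (z : P), η (i1 a * i2 b * z) = i1 a * i2 b * η z)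
    (hηtarget : ∀ z, η z ∈ Algebra.adjoin K
      ((Set.range fun g => i1 (gen g)) ∪ Set.range fun g => i2 (gen g)))
    (hηdeg : ∀ (t : ℤ) (z : P), z ∈ grading K pgen pdg t → η z ∈ grading K pgen pdg (t + n₀))
    (hηcocycle : ∀ z, dP (η z) = ((-1 : K) ^ n₀) • η (dP z))
    -- the normalization η(sx_1⋯sx_p) = (1⊗y_1 − y_1⊗1)⋯(1⊗y_q − y_q⊗1)
    (hηval : η (mon pgen (List.ofFn fun i : Fin p => Sum.inr (Sum.inr (Sum.inl i)))) =
      (List.ofFn fun j : Fin q =>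
        i2 (gen (Sum.inr j)) - i1 (gen (Sum.inr j))).prod) :
    -- conclusion: η is not a coboundary, i.e. [η] ≠ 0 in Ext_{∧V⊗∧V}(∧V, ∧V⊗∧V)
    ¬ ∃ ξ : P →ₗ[K] P,
        (∀ (a b : A) (z : P), ξ (i1 a * i2 b * z) = i1 a * i2 b * ξ z) ∧
        (∀ z, ξ z ∈ Algebra.adjoin K
          ((Set.range fun g => i1 (gen g)) ∪ Set.range fun g => i2 (gen g))) ∧
        (∀ (t : ℤ) (z : P), z ∈ grading K pgen pdg t →
          ξ z ∈ grading K pgen pdg (t + (n₀ - 1))) ∧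
        (∀ z, η z = dP (ξ z) - ((-1 : K) ^ (n₀ - 1)) • ξ (dP z)) := by
  rintro ⟨ξ, hξlin, hξtarget, hξdeg, hξeq⟩
  classical
  obtain ⟨bP, hbP⟩ := hPfree
  obtain ⟨bA, hbA⟩ := hfree
  -- the list of right-copy odd generators and its sorted version
  have hsortyR := sort_mon pgen pdg hPcomm
    (List.ofFn fun j : Fin q => (Sum.inr (Sum.inl (Sum.inr j)) :
      (Fin p ⊕ Fin q) ⊕ (Fin p ⊕ Fin q) ⊕ (Fin p ⊕ Fin q)))
  obtain ⟨c, ls, hc, hperm, hsort, hmon⟩ := hsortyR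
  have hnodup : (List.ofFn fun j : Fin q => (Sum.inr (Sum.inl (Sum.inr j)) :
      (Fin p ⊕ Fin q) ⊕ (Fin p ⊕ Fin q) ⊕ (Fin p ⊕ Fin q))).Nodup := by
    rw [List.nodup_ofFn]
    intro a b hab
    simpa using hab
  have hnodup' : ls.Nodup := (hperm.nodup_iff).mpr hnodup
  set idx : GCAIdx ((Fin p ⊕ Fin q) ⊕ (Fin p ⊕ Fin q) ⊕ (Fin p ⊕ Fin q)) pdg :=
    ⟨ls, hsort, count_le_one_of_nodup pdg hnodup'⟩ with hidx
  -- members of ls are exactly the right-copy odd generators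
  have hmem_ls : ∀ g, g ∈ ls → ∃ j : Fin q, g = Sum.inr (Sum.inl (Sum.inr j)) := by
    intro g hg
    have := hperm.subset hg
    obtain ⟨j, hj⟩ := List.mem_ofFn.mp this
    exact ⟨j, hj.symm⟩
  -- Φ vanishing on monomials containing a non-(right-copy-odd) generator
  have hPhiMon : ∀ l : List ((Fin p ⊕ Fin q) ⊕ (Fin p ⊕ Fin q) ⊕ (Fin p ⊕ Fin q)),
      (∃ g ∈ l, ∀ j : Fin q, g ≠ Sum.inr (Sum.inl (Sum.inr j))) →
      bP.coord idx (mon pgen l) = 0 := by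
    rintro l ⟨g, hgl, hbad⟩
    rw [Module.Basis.coord_apply]
    apply coord_eq_zero pgen pdg hPcomm bP hbP
    intro hp
    obtain ⟨j, hj⟩ := hmem_ls g (hp.subset hgl)
    exact hbad j hj
  have hPhiMulGen : ∀ h : (Fin p ⊕ Fin q) ⊕ (Fin p ⊕ Fin q) ⊕ (Fin p ⊕ Fin q),
      (∀ j : Fin q, h ≠ Sum.inr (Sum.inl (Sum.inr j))) → ∀ w : P,
      bP.coord idx (pgen h * w) = 0 := by
    intro h hbad w
    have hzero : (bP.coord idx).comp (LinearMap.mulLeft K (pgen h)) = 0 := by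
      apply bP.ext
      intro l₀
      simp only [LinearMap.comp_apply, LinearMap.mulLeft_apply, LinearMap.zero_apply]
      rw [hbP l₀, ← mon_cons]
      exact hPhiMon (h :: l₀.1) ⟨h, by simp, hbad⟩
    simpa using LinearMap.congr_fun hzero w
  -- the submodule N of monomials containing a generator which is not a right-copy odd
  set N : Submodule K P := Submodule.span K
    {a : P | ∃ l : List ((Fin p ⊕ Fin q) ⊕ (Fin p ⊕ Fin q) ⊕ (Fin p ⊕ Fin q)),
      (∃ g ∈ l, ∀ j : Fin q, g ≠ Sum.inr (Sum.inl (Sum.inr j))) ∧ a = mon pgen l} with hN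
  have hPhiN : ∀ w ∈ N, bP.coord idx w = 0 := by
    intro w hw
    have hker : N ≤ LinearMap.ker (bP.coord idx) := by
      rw [hN]
      apply Submodule.span_le.mpr
      rintro a ⟨l, hbadl, rfl⟩
      exact LinearMap.mem_ker.mpr (hPhiMon l hbadl)
    exact LinearMap.mem_ker.mp (hker hw)
  have hNleft : ∀ (h : (Fin p ⊕ Fin q) ⊕ (Fin p ⊕ Fin q) ⊕ (Fin p ⊕ Fin q)) (w : P),
      w ∈ N → pgen h * w ∈ N := by
    intro h w hw
    refine mem_span_comap (LinearMap.mulLeft K (pgen h)) ?_ hw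
    rintro a ⟨l, ⟨g, hgl, hbad⟩, rfl⟩
    rw [hN]
    apply Submodule.subset_span
    exact ⟨h :: l, ⟨g, List.mem_cons_of_mem _ hgl, hbad⟩,
      by rw [LinearMap.mulLeft_apply, mon_cons]⟩
  have hNright : ∀ (L : List ((Fin p ⊕ Fin q) ⊕ (Fin p ⊕ Fin q) ⊕ (Fin p ⊕ Fin q))) (w : P),
      w ∈ N → w * mon pgen L ∈ N := by
    intro L w hw
    refine mem_span_comap (LinearMap.mulRight K (mon pgen L)) ?_ hw
    rintro a ⟨l, ⟨g, hgl, hbad⟩, rfl⟩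
    rw [hN]
    apply Submodule.subset_span
    exact ⟨l ++ L, ⟨g, List.mem_append_left _ hgl, hbad⟩,
      by rw [LinearMap.mulRight_apply, mon_append]⟩
  -- dA of an odd generator is a combination of nonempty x-monomials
  have hdAy : ∀ j : Fin q, dA (gen (Sum.inr j)) ∈ Submodule.span K
      {a : A | ∃ l : List (Fin p ⊕ Fin q), l ≠ [] ∧
        (∀ g ∈ l, ∃ i : Fin p, g = Sum.inl i) ∧ a = mon gen l} := by
    intro j
    have hw_deg : dA (gen (Sum.inr j)) ∈ grading K gen dg (dg (Sum.inr j) + 1) :=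
      hdA.1.1 _ _ (gen_mem_grading gen dg _)
    have ht : dg (Sum.inr j) + 1 ≠ 0 := by have := hpos (Sum.inr j); omega
    have hadj : dA (gen (Sum.inr j)) ∈ Submodule.span K
        {a : A | ∃ l : List (Fin p ⊕ Fin q), (∀ g ∈ l, ∃ i : Fin p, g = Sum.inl i) ∧
          a = mon gen l} := by
      have hw' : dA (gen (Sum.inr j)) ∈ Subalgebra.toSubmodule
          (Algebra.adjoin K (Set.range fun i : Fin p => gen (Sum.inl i))) := hpure_odd j
      rw [Algebra.adjoin_eq_span] at hw'
      refine Submodule.span_le.mpr ?_ hw'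
      intro u hu
      obtain ⟨lA, hlA, rfl⟩ := Submonoid.exists_list_of_mem_closure hu
      obtain ⟨l, hall, hprod⟩ := list_prod_eq_mon gen
        (fun g => ∃ i : Fin p, g = Sum.inl i) lA (by
          intro a ha
          obtain ⟨i, hi⟩ := hlA a ha
          exact ⟨Sum.inl i, ⟨i, rfl⟩, hi.symm⟩)
      rw [hprod]
      exact Submodule.subset_span ⟨l, hall, rfl⟩
    exact grading_adjoin_mem_span gen dg hcomm bA hbA _ ht hw_deg hadj
  -- images of dA-values of generators under the two copies land in N
  have hN_dAy : ∀ (f : A →ₐ[K] P) (e : (Fin p ⊕ Fin q) →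
        (Fin p ⊕ Fin q) ⊕ (Fin p ⊕ Fin q) ⊕ (Fin p ⊕ Fin q)),
      (∀ g, f (gen g) = pgen (e g)) →
      (∀ (i : Fin p) (j : Fin q), e (Sum.inl i) ≠ Sum.inr (Sum.inl (Sum.inr j))) →
      ∀ j : Fin q, f (dA (gen (Sum.inr j))) ∈ N := by
    intro f e hf he j
    refine mem_span_comap f.toLinearMap ?_ (hdAy j)
    rintro a ⟨l, hnil, hall, rfl⟩
    rw [AlgHom.toLinearMap_apply, map_mon gen f e pgen hf l, hN]
    apply Submodule.subset_span
    refine ⟨l.map e, ?_, rfl⟩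
    cases l with
    | nil => exact absurd rfl hnil
    | cons g t =>
      obtain ⟨i, rfl⟩ := hall g (by simp)
      exact ⟨e (Sum.inl i), by simp, he i⟩
  have hdcopy1 : ∀ g', dP (pgen (Sum.inl g')) ∈ N := by
    intro g'
    rw [← hi1 g', hdP1]
    cases g' with
    | inl i =>
      rw [hpure_even i, map_zero]
      exact Submodule.zero_mem N
    | inr j => exact hN_dAy i1 Sum.inl hi1 (fun i j' => by simp) j
  have hdcopy2 : ∀ g', dP (pgen (Sum.inr (Sum.inl g'))) ∈ N := by
    intro g'
    rw [← hi2 g', hdP2]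
    cases g' with
    | inl i =>
      rw [hpure_even i, map_zero]
      exact Submodule.zero_mem N
    | inr j => exact hN_dAy i2 (fun g => Sum.inr (Sum.inl g)) hi2 (fun i j' => by simp) j
  -- the differential of a copy monomial is in N
  have hdCopyMon : ∀ L : List ((Fin p ⊕ Fin q) ⊕ (Fin p ⊕ Fin q) ⊕ (Fin p ⊕ Fin q)),
      (∀ g ∈ L, (∃ g', g = Sum.inl g') ∨ (∃ g', g = Sum.inr (Sum.inl g'))) →
      dP (mon pgen L) ∈ N := by
    intro L
    induction L with
    | nil =>
      intro _
      rw [mon_nil, der_one_eq_zero pgen pdg hdP.1]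
      exact Submodule.zero_mem N
    | cons g t ih =>
      intro hall
      rw [mon_cons, hdP.1.2 (pdg g) (pgen g) (mon pgen t) (gen_mem_grading pgen pdg g)]
      refine Submodule.add_mem N ?_ (Submodule.smul_mem N _
        (hNleft g _ (ih fun g' hg' => hall g' (List.mem_cons_of_mem _ hg'))))
      rcases hall g (by simp) with ⟨g', rfl⟩ | ⟨g', rfl⟩
      · exact hNright t _ (hdcopy1 g')
      · exact hNright t _ (hdcopy2 g')
  -- dP of anything in ∧V⊗∧V is in N
  have hdP_target : ∀ w : P, w ∈ Algebra.adjoin K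
      ((Set.range fun g => i1 (gen g)) ∪ Set.range fun g => i2 (gen g)) → dP w ∈ N := by
    intro w hw
    have hw' : w ∈ Subalgebra.toSubmodule (Algebra.adjoin K
        ((Set.range fun g => i1 (gen g)) ∪ Set.range fun g => i2 (gen g))) := hw
    rw [Algebra.adjoin_eq_span] at hw'
    refine mem_span_comap dP ?_ hw'
    intro u hu
    obtain ⟨lA, hlA, rfl⟩ := Submonoid.exists_list_of_mem_closure hu
    obtain ⟨L, hall, hprod⟩ := list_prod_eq_mon pgen
      (fun g => (∃ g', g = Sum.inl g') ∨ (∃ g', g = Sum.inr (Sum.inl g'))) lA (by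
        intro a ha
        rcases hlA a ha with ⟨g, hg⟩ | ⟨g, hg⟩
        · exact ⟨Sum.inl g, Or.inl ⟨g, rfl⟩, by rw [← hg]; exact hi1 g⟩
        · exact ⟨Sum.inr (Sum.inl g), Or.inr ⟨g, rfl⟩, by rw [← hg]; exact hi2 g⟩)
    rw [hprod]
    exact hdCopyMon L hall
  -- the submodule NA of x-copy multiples
  set NA : Submodule K P := Submodule.span K
    {a : P | ∃ i : Fin p, ∃ z : P, a = pgen (Sum.inl (Sum.inl i)) * z ∨
      a = pgen (Sum.inr (Sum.inl (Sum.inl i))) * z} with hNA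
  have hNAleft : ∀ (h : (Fin p ⊕ Fin q) ⊕ (Fin p ⊕ Fin q) ⊕ (Fin p ⊕ Fin q)) (w : P),
      w ∈ NA → pgen h * w ∈ NA := by
    intro h w hw
    refine mem_span_comap (LinearMap.mulLeft K (pgen h)) ?_ hw
    rintro a ⟨i, z, hz | hz⟩ <;> subst hz <;>
      simp only [LinearMap.mulLeft_apply] <;> rw [hNA]
    · have hx : pgen h * pgen (Sum.inl (Sum.inl i)) =
          pgen (Sum.inl (Sum.inl i)) * pgen h := by
        rw [hPcomm h (Sum.inl (Sum.inl i)), neg_one_zpow_even, one_smul]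
        have : Even (pdg (Sum.inl (Sum.inl i))) := by
          rw [(hpdg (Sum.inl i)).1]; exact heven i
        exact this.mul_left _
      rw [← mul_assoc, hx, mul_assoc]
      exact Submodule.subset_span ⟨i, pgen h * z, Or.inl rfl⟩
    · have hx : pgen h * pgen (Sum.inr (Sum.inl (Sum.inl i))) =
          pgen (Sum.inr (Sum.inl (Sum.inl i))) * pgen h := by
        rw [hPcomm h (Sum.inr (Sum.inl (Sum.inl i))), neg_one_zpow_even, one_smul]
        have : Even (pdg (Sum.inr (Sum.inl (Sum.inl i)))) := by
          rw [(hpdg (Sum.inl i)).2.1]; exact heven i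
        exact this.mul_left _
      rw [← mul_assoc, hx, mul_assoc]
      exact Submodule.subset_span ⟨i, pgen h * z, Or.inr rfl⟩
  -- dP of the sx-monomial is in NA
  have hdPm : ∀ L : List (Fin p),
      dP (mon pgen (L.map fun i => Sum.inr (Sum.inr (Sum.inl i)))) ∈ NA := by
    intro L
    induction L with
    | nil =>
      rw [List.map_nil, mon_nil, der_one_eq_zero pgen pdg hdP.1]
      exact Submodule.zero_mem NA
    | cons i t ih =>
      rw [List.map_cons, mon_cons,
        hdP.1.2 (pdg (Sum.inr (Sum.inr (Sum.inl i)))) _ _ (gen_mem_grading pgen pdg _)]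
      refine Submodule.add_mem NA ?_ (Submodule.smul_mem NA _ (hNAleft _ _ ih))
      obtain ⟨Nn, hvan, heq⟩ := hdPs (Sum.inl i)
      have hsum0 : ∀ k ∈ Finset.Icc 1 Nn,
          ((k.factorial : K)⁻¹) • ((sder ∘ₗ dP) ^ k) (i1 (gen (Sum.inl i))) = 0 := by
        intro k hk
        obtain ⟨k', rfl⟩ : ∃ k', k = k' + 1 :=
          ⟨k - 1, by have := (Finset.mem_Icc.mp hk).1; omega⟩
        rw [pow_succ, Module.End.mul_apply, LinearMap.comp_apply, hdP1, hpure_even i,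
          map_zero, map_zero, map_zero, smul_zero]
      have hds : dP (pgen (Sum.inr (Sum.inr (Sum.inl i)))) =
          pgen (Sum.inr (Sum.inl (Sum.inl i))) - pgen (Sum.inl (Sum.inl i)) := by
        rw [heq, Finset.sum_eq_zero hsum0, sub_zero, hi2, hi1]
      rw [hds, sub_mul, hNA]
      exact Submodule.sub_mem _
        (Submodule.subset_span ⟨i, _, Or.inr rfl⟩)
        (Submodule.subset_span ⟨i, _, Or.inl rfl⟩)
  -- Φ ∘ ξ vanishes on NA
  have hPhiXiNA : ∀ w ∈ NA, bP.coord idx (ξ w) = 0 := by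
    intro w hw
    have hker : NA ≤ LinearMap.ker ((bP.coord idx).comp ξ) := by
      rw [hNA]
      apply Submodule.span_le.mpr
      rintro a ⟨i, z, hz | hz⟩ <;> subst hz <;>
        refine LinearMap.mem_ker.mpr ?_ <;> rw [LinearMap.comp_apply]
      · have h1 : pgen (Sum.inl (Sum.inl i)) * z = i1 (gen (Sum.inl i)) * i2 (1 : A) * z := by
          rw [map_one, mul_one, hi1]
        rw [h1, hξlin, map_one, mul_one, hi1]
        exact hPhiMulGen _ (fun j => by simp) (ξ z)
      · have h1 : pgen (Sum.inr (Sum.inl (Sum.inl i))) * z =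
            i1 (1 : A) * i2 (gen (Sum.inl i)) * z := by
          rw [map_one, one_mul, hi2]
        rw [h1, hξlin, map_one, one_mul, hi2]
        exact hPhiMulGen _ (fun j => by simp) (ξ z)
    exact LinearMap.mem_ker.mp (hker hw)
  -- multiplying anything by a left-copy generator lands in N
  have hInlMul : ∀ (s : Fin p ⊕ Fin q) (w : P), pgen (Sum.inl s) * w ∈ N := by
    intro s w
    have hw : w ∈ Submodule.span K (Set.range bP) := by rw [bP.span_eq]; trivial
    refine mem_span_comap (LinearMap.mulLeft K (pgen (Sum.inl s))) ?_ hw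
    rintro a ⟨l₀, rfl⟩
    rw [LinearMap.mulLeft_apply, hbP l₀, ← mon_cons, hN]
    exact Submodule.subset_span
      ⟨Sum.inl s :: l₀.1, ⟨Sum.inl s, by simp, fun j => by simp⟩, rfl⟩
  -- the product expansion of ω
  have hprod_claim : ∀ J : List (Fin q),
      ((J.map fun j => pgen (Sum.inr (Sum.inl (Sum.inr j))) - pgen (Sum.inl (Sum.inr j))).prod
        - mon pgen (J.map fun j => Sum.inr (Sum.inl (Sum.inr j)))) ∈ N := by
    intro J
    induction J with
    | nil =>
      simp only [List.map_nil, List.prod_nil, mon_nil, sub_self]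
      exact Submodule.zero_mem N
    | cons j t ih =>
      rw [List.map_cons, List.prod_cons, List.map_cons, mon_cons]
      have key : (pgen (Sum.inr (Sum.inl (Sum.inr j))) - pgen (Sum.inl (Sum.inr j))) *
            (t.map fun j => pgen (Sum.inr (Sum.inl (Sum.inr j))) - pgen (Sum.inl (Sum.inr j))).prod
          - pgen (Sum.inr (Sum.inl (Sum.inr j))) *
            mon pgen (t.map fun j => Sum.inr (Sum.inl (Sum.inr j)))
          = pgen (Sum.inr (Sum.inl (Sum.inr j))) *
              ((t.map fun j => pgen (Sum.inr (Sum.inl (Sum.inr j))) - pgen (Sum.inl (Sum.inr j))).prod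
                - mon pgen (t.map fun j => Sum.inr (Sum.inl (Sum.inr j))))
            - pgen (Sum.inl (Sum.inr j)) *
              (t.map fun j => pgen (Sum.inr (Sum.inl (Sum.inr j))) - pgen (Sum.inl (Sum.inr j))).prod := by
        noncomm_ring
      rw [key]
      exact Submodule.sub_mem N (hNleft _ _ ih) (hInlMul (Sum.inr j) _)
  -- compute Φ(η m)
  have hη2 : η (mon pgen (List.ofFn fun i : Fin p => Sum.inr (Sum.inr (Sum.inl i)))) =
      ((List.finRange q).map fun j =>
        pgen (Sum.inr (Sum.inl (Sum.inr j))) - pgen (Sum.inl (Sum.inr j))).prod := by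
    rw [hηval]
    simp only [hi1, hi2, List.ofFn_eq_map]
  have hlyR : (List.ofFn fun j : Fin q => Sum.inr (Sum.inl (Sum.inr j))) =
      (List.finRange q).map fun j =>
        (Sum.inr (Sum.inl (Sum.inr j)) : (Fin p ⊕ Fin q) ⊕ (Fin p ⊕ Fin q) ⊕ (Fin p ⊕ Fin q)) :=
    List.ofFn_eq_map
  have hPhiEta : bP.coord idx
      (η (mon pgen (List.ofFn fun i : Fin p => Sum.inr (Sum.inr (Sum.inl i))))) = c := by
    have hdiff : η (mon pgen (List.ofFn fun i : Fin p => Sum.inr (Sum.inr (Sum.inl i)))) -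
        mon pgen (List.ofFn fun j : Fin q => (Sum.inr (Sum.inl (Sum.inr j)) :
          (Fin p ⊕ Fin q) ⊕ (Fin p ⊕ Fin q) ⊕ (Fin p ⊕ Fin q))) ∈ N := by
      rw [hη2, hlyR]
      exact hprod_claim (List.finRange q)
    have h0 := hPhiN _ hdiff
    rw [map_sub, sub_eq_zero] at h0
    rw [h0, hmon, map_smul]
    have hbidx : bP idx = mon pgen ls := hbP idx
    rw [← hbidx, Module.Basis.coord_apply, Module.Basis.repr_self, Finsupp.single_eq_same, smul_eq_mul, mul_one]
  -- assemble the contradiction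
  have hfin := congrArg (bP.coord idx) (hξeq
    (mon pgen (List.ofFn fun i : Fin p => Sum.inr (Sum.inr (Sum.inl i)))))
  rw [map_sub, map_smul, hPhiEta] at hfin
  have h1 : bP.coord idx (dP (ξ (mon pgen
      (List.ofFn fun i : Fin p => Sum.inr (Sum.inr (Sum.inl i)))))) = 0 :=
    hPhiN _ (hdP_target _ (hξtarget _))
  have h2 : bP.coord idx (ξ (dP (mon pgen
      (List.ofFn fun i : Fin p => Sum.inr (Sum.inr (Sum.inl i)))))) = 0 := by
    apply hPhiXiNA
    have := hdPm (List.finRange p)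
    rw [← List.ofFn_eq_map] at this
    exact this
  rw [h1, h2, smul_zero, sub_zero] at hfin
  rcases hc with rfl | rfl
  · exact one_ne_zero hfin
  · exact (by norm_num : (-1 : K) ≠ 0) hfin


end Brane
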